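/- arXiv:2603.17595 — 2 statements merged into one kernel-verified Lean document; each statement's English description precedes it below -/
import Mathlib

section
/- Let B and C be n×n real symmetric matrices, let N = [[B, C],[C, B]], let u ∈ ℝ^n be a unit vector, let τ ∈ ℝ, and let α, β ∈ ℂ with β ≠ 0. Then exp(iτN) [uᵀ 0]ᵀ = α [uᵀ 0]ᵀ + β [0 uᵀ]ᵀ if and only if exp(iτ(B+C)) u = (α+β) u and exp(iτ(B−C)) u = (α−β) u. -/
open Matrix Filter

/-- Transition matrix `U(t) = exp(itM)` of a real symmetric matrix `M`, acting on `ℂ^ι`. -/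
noncomputable def transU {ι : Type*} [Fintype ι] [DecidableEq ι]
    (M : Matrix ι ι ℝ) (t : ℝ) : Matrix ι ι ℂ :=
  NormedSpace.exp ((Complex.I * (t : ℂ)) • M.map Complex.ofReal)

/-- Transition matrix `exp(itM)` of a complex matrix `M`. -/
noncomputable def transUC {ι : Type*} [Fintype ι] [DecidableEq ι]
    (M : Matrix ι ι ℂ) (t : ℝ) : Matrix ι ι ℂ :=
  NormedSpace.exp ((Complex.I * (t : ℂ)) • M)

/-- Real standard basis vector `e_a`. -/
def eVecR {ι : Type*} [DecidableEq ι] (a : ι) : ι → ℝ := fun j => if j = a then 1 else 0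

/-- Complex standard basis vector `e_a`. -/
def eVec {ι : Type*} [DecidableEq ι] (a : ι) : ι → ℂ := fun j => if j = a then 1 else 0

/-- Coercion of a real vector to a complex vector. -/
def cVec {ι : Type*} (u : ι → ℝ) : ι → ℂ := fun j => (u j : ℂ)

/-- The plus state `(e_a + e_b)/√2`. -/
noncomputable def plusState {ι : Type*} [DecidableEq ι] (a b : ι) : ι → ℂ :=
  ((Real.sqrt 2 : ℂ))⁻¹ • (eVec a + eVec b)

/-- The pair state `(e_a − e_b)/√2`. -/
noncomputable def pairState {ι : Type*} [DecidableEq ι] (a b : ι) : ι → ℂ :=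
  ((Real.sqrt 2 : ℂ))⁻¹ • (eVec a - eVec b)

/-- Pretty good state transfer from `u` to `v` relative to `M`:
there are a sequence of times `t k` and a unimodular `γ` with `U(t k) u → γ v`. -/
def PGST {ι : Type*} [Fintype ι] [DecidableEq ι]
    (M : Matrix ι ι ℝ) (u v : ι → ℂ) : Prop :=
  ∃ (t : ℕ → ℝ) (γ : ℂ), ‖γ‖ = 1 ∧
    Tendsto (fun k => (transU M (t k)).mulVec u) atTop (nhds (γ • v))

/-- The permutation matrix of `σ`, satisfying `permMat σ *ᵥ e_a = e_{σ a}`. -/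
def permMat {ι : Type*} [DecidableEq ι] (σ : Equiv.Perm ι) : Matrix ι ι ℝ :=
  Matrix.of fun i j => if σ j = i then 1 else 0

/-- Adjacency matrix of the circulant graph `Cay(ℤ/n, S)`. -/
noncomputable def cayA (n : ℕ) (S : Finset (ZMod n)) : Matrix (ZMod n) (ZMod n) ℝ :=
  Matrix.of fun a b => if a - b ∈ S then 1 else 0

/-- Adjacency matrix of the cycle `C_n` on `ℤ/n`. -/
noncomputable def cycA (n : ℕ) : Matrix (ZMod n) (ZMod n) ℝ :=
  Matrix.of fun a b => if a - b = 1 ∨ b - a = 1 then 1 else 0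

/-- Adjacency matrix `J − I − A(C_n)` of the complement of the cycle `C_n`. -/
noncomputable def cycAbar (n : ℕ) : Matrix (ZMod n) (ZMod n) ℝ :=
  Matrix.of (fun _ _ => (1 : ℝ)) - 1 - cycA n

open NormedSpace Nat

noncomputable def mulVecCLM {p : Type*} [Fintype p] (v : p → ℂ) :
    Matrix p p ℂ →L[ℂ] (p → ℂ) :=
  LinearMap.toContinuousLinearMap
    { toFun := fun M => M *ᵥ v
      map_add' := fun M N => Matrix.add_mulVec M N v
      map_smul' := fun c M => Matrix.smul_mulVec c M v }

lemma exp_mulVec_intertwine {p q : Type*} [Fintype p] [DecidableEq p] [Fintype q] [DecidableEq q]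
    (M : Matrix p p ℂ) (A : Matrix q q ℂ) (L : (q → ℂ) →ₗ[ℂ] (p → ℂ))
    (h : ∀ x, M *ᵥ L x = L (A *ᵥ x)) (x : q → ℂ) :
    exp M *ᵥ L x = L (exp A *ᵥ x) := by
  letI : NormedRing (Matrix p p ℂ) := Matrix.linftyOpNormedRing
  letI : NormedAlgebra ℂ (Matrix p p ℂ) := Matrix.linftyOpNormedAlgebra
  letI : NormedRing (Matrix q q ℂ) := Matrix.linftyOpNormedRing
  letI : NormedAlgebra ℂ (Matrix q q ℂ) := Matrix.linftyOpNormedAlgebra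
  have hpow : ∀ (k : ℕ) (y : q → ℂ), M ^ k *ᵥ L y = L (A ^ k *ᵥ y) := by
    intro k
    induction k with
    | zero => intro y; simp
    | succ k ih =>
      intro y
      rw [pow_succ, pow_succ, ← Matrix.mulVec_mulVec, ← Matrix.mulVec_mulVec, h, ih]
  have hsM : Summable fun k : ℕ => ((k ! : ℂ))⁻¹ • M ^ k := expSeries_summable' M
  have hsA : Summable fun k : ℕ => ((k ! : ℂ))⁻¹ • A ^ k := expSeries_summable' A
  have hL : Continuous L := L.continuous_of_finiteDimensional
  have hsAx : Summable fun k : ℕ => ((k ! : ℂ))⁻¹ • (A ^ k *ᵥ x) := by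
    have := hsA.map (mulVecCLM x : Matrix q q ℂ →L[ℂ] (q → ℂ)).toLinearMap.toAddMonoidHom
      (mulVecCLM x).continuous
    simpa [Function.comp_def, mulVecCLM, Matrix.smul_mulVec] using this
  calc exp M *ᵥ L x = (mulVecCLM (L x)) (∑' k : ℕ, ((k ! : ℂ))⁻¹ • M ^ k) := by
        rw [exp_eq_tsum (𝕂 := ℂ)]; rfl
    _ = ∑' k : ℕ, ((k ! : ℂ))⁻¹ • (M ^ k *ᵥ L x) := by
        rw [ContinuousLinearMap.map_tsum _ hsM]
        simp [mulVecCLM, Matrix.smul_mulVec]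
    _ = ∑' k : ℕ, L (((k ! : ℂ))⁻¹ • (A ^ k *ᵥ x)) := by
        simp_rw [hpow, L.map_smul]
    _ = L (∑' k : ℕ, ((k ! : ℂ))⁻¹ • (A ^ k *ᵥ x)) := by
        exact (hsAx.map_tsum L.toAddMonoidHom hL).symm
    _ = L (exp A *ᵥ x) := by
        congr 1
        rw [exp_eq_tsum (𝕂 := ℂ)]
        have h2 := (ContinuousLinearMap.map_tsum (mulVecCLM x) hsA).symm
        simpa [mulVecCLM, Matrix.smul_mulVec] using h2

noncomputable def sumElimL (n : ℕ) (s : ℂ) : (Fin n → ℂ) →ₗ[ℂ] (Fin n ⊕ Fin n → ℂ) where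
  toFun x := Sum.elim x (s • x)
  map_add' x y := by funext i; rcases i with i | i <;> simp [mul_add]
  map_smul' c x := by funext i; rcases i with i | i <;> simp <;> ring

lemma sumElim_eq_iff {n : ℕ} (a b c d : Fin n → ℂ) :
    Sum.elim a b = Sum.elim c d ↔ a = c ∧ b = d := by
  constructor
  · intro h
    exact ⟨funext fun i => congrFun h (.inl i), funext fun i => congrFun h (.inr i)⟩
  · rintro ⟨rfl, rfl⟩; rfl

/-- `(α,β)`-fractional revival from `[uᵀ 0]ᵀ` to `[0 uᵀ]ᵀ` in the double cover
iff `u` is periodic for `B+C` and `B−C` with phases `α+β` and `α−β`. -/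
theorem double_cover_FR_across {n : ℕ}
    (B C : Matrix (Fin n) (Fin n) ℝ) (hB : B.IsSymm) (hC : C.IsSymm)
    (u : Fin n → ℝ) (hu : u ⬝ᵥ u = 1) (τ : ℝ) (α β : ℂ) (hβ : β ≠ 0) :
    (transU (Matrix.fromBlocks B C C B) τ) *ᵥ Sum.elim (cVec u) (0 : Fin n → ℂ)
        = α • Sum.elim (cVec u) (0 : Fin n → ℂ) + β • Sum.elim (0 : Fin n → ℂ) (cVec u)
      ↔ ((transU (B + C) τ) *ᵥ cVec u = (α + β) • cVec u ∧
         (transU (B - C) τ) *ᵥ cVec u = (α - β) • cVec u) := by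
  simp only [transU, cVec]
  set c : ℂ := Complex.I * τ with hc
  set B' : Matrix (Fin n) (Fin n) ℂ := B.map Complex.ofReal with hB'
  set C' : Matrix (Fin n) (Fin n) ℂ := C.map Complex.ofReal with hC'
  set u' : Fin n → ℂ := cVec u with hu'
  have hmapadd : (B + C).map Complex.ofReal = B' + C' :=
    Matrix.map_add _ (by push_cast; simp) _ _
  have hmapsub : (B - C).map Complex.ofReal = B' - C' :=
    Matrix.map_sub _ (by push_cast; simp) _ _
  have hmapblock : (Matrix.fromBlocks B C C B).map Complex.ofReal =
      Matrix.fromBlocks B' C' C' B' := Matrix.fromBlocks_map _ _ _ _ _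
  rw [hmapadd, hmapsub, hmapblock]
  set M : Matrix (Fin n ⊕ Fin n) (Fin n ⊕ Fin n) ℂ := c • Matrix.fromBlocks B' C' C' B' with hM
  set yp : Fin n → ℂ := NormedSpace.exp (c • (B' + C')) *ᵥ u' with hyp
  set ym : Fin n → ℂ := NormedSpace.exp (c • (B' - C')) *ᵥ u' with hym
  have keyp : ∀ x : Fin n → ℂ, NormedSpace.exp M *ᵥ (sumElimL n 1) x
      = (sumElimL n 1) (NormedSpace.exp (c • (B' + C')) *ᵥ x) := by
    intro x
    refine exp_mulVec_intertwine M (c • (B' + C')) (sumElimL n 1) (fun x => ?_) x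
    show M *ᵥ Sum.elim x ((1:ℂ) • x) = Sum.elim _ _
    rw [hM, Matrix.smul_mulVec, Matrix.fromBlocks_mulVec, Matrix.smul_mulVec]
    funext i
    rcases i with i | i <;>
      simp [Matrix.add_mulVec, Matrix.mulVec_smul, add_comm, mul_add]
  have keym : ∀ x : Fin n → ℂ, NormedSpace.exp M *ᵥ (sumElimL n (-1)) x
      = (sumElimL n (-1)) (NormedSpace.exp (c • (B' - C')) *ᵥ x) := by
    intro x
    refine exp_mulVec_intertwine M (c • (B' - C')) (sumElimL n (-1)) (fun x => ?_) x
    show M *ᵥ Sum.elim x ((-1:ℂ) • x) = Sum.elim _ _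
    rw [hM, Matrix.smul_mulVec, Matrix.fromBlocks_mulVec, Matrix.smul_mulVec]
    funext i
    rcases i with i | i <;>
      simp [Matrix.sub_mulVec, Matrix.mulVec_smul, mul_sub, Matrix.mulVec_neg] <;> ring_nf <;>
      simp [Pi.sub_apply, mul_sub, sub_eq_add_neg] <;> ring
  have hsplit : Sum.elim u' (0 : Fin n → ℂ)
      = (2:ℂ)⁻¹ • ((sumElimL n 1) u' + (sumElimL n (-1)) u') := by
    funext i
    rcases i with i | i <;> simp [sumElimL] <;> ring
  have hLHS : NormedSpace.exp M *ᵥ Sum.elim u' (0 : Fin n → ℂ)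
      = Sum.elim ((2:ℂ)⁻¹ • (yp + ym)) ((2:ℂ)⁻¹ • (yp - ym)) := by
    rw [hsplit, Matrix.mulVec_smul, Matrix.mulVec_add, keyp, keym, ← hyp, ← hym]
    funext i
    rcases i with i | i <;>
      simp only [sumElimL, LinearMap.coe_mk, AddHom.coe_mk, Sum.elim_inl, Sum.elim_inr,
        Pi.smul_apply, Pi.add_apply, Pi.sub_apply, smul_eq_mul] <;> ring
  have hRHS : α • Sum.elim u' (0 : Fin n → ℂ) + β • Sum.elim (0 : Fin n → ℂ) u'
      = Sum.elim (α • u') (β • u') := by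
    funext i; rcases i with i | i <;> simp
  rw [hLHS, hRHS, sumElim_eq_iff]
  constructor
  · rintro ⟨h1, h2⟩
    constructor <;> funext i <;>
      [have a := congrFun h1 i; have a := congrFun h1 i] <;>
      have b := congrFun h2 i <;>
      simp only [Pi.smul_apply, Pi.add_apply, Pi.sub_apply, smul_eq_mul] at a b ⊢
    · linear_combination a + b
    · linear_combination a - b
  · rintro ⟨h1, h2⟩
    constructor <;> funext i <;>
      [have a := congrFun h1 i; have a := congrFun h1 i] <;>
      have b := congrFun h2 i <;>
      simp only [Pi.smul_apply, Pi.add_apply, Pi.sub_apply, smul_eq_mul] at a b ⊢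
    · linear_combination 2⁻¹ * a + 2⁻¹ * b
    · linear_combination 2⁻¹ * a - 2⁻¹ * b
end

section
/- Let n be an odd positive integer and let S ⊆ (ℤ/nℤ) \ {0} satisfy S = −S. Then the circulant graph Cay(ℤ/nℤ, S) admits no pretty good plus state transfer with respect to its adjacency matrix A: there do not exist vertices a ≠ b and c ≠ d with e_a + e_b ≠ e_c + e_d, a sequence of real numbers t_k, and γ ∈ ℂ with |γ| = 1, such that exp(i t_k A)(e_a + e_b)/√2 → γ (e_c + e_d)/√2 as k → ∞. -/
open Matrix Filter

section Aux

open NormedSpace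

variable {ι : Type*} [Fintype ι] [DecidableEq ι]

lemma permMat_mul_permMat (σ τ : Equiv.Perm ι) :
    ((permMat σ).map Complex.ofReal) * ((permMat τ).map Complex.ofReal)
      = (permMat (σ * τ)).map Complex.ofReal := by
  ext i j
  simp only [Matrix.mul_apply, Matrix.map_apply, permMat, Matrix.of_apply]
  rw [Finset.sum_eq_single (τ j)]
  · simp only [Equiv.Perm.mul_apply]; split_ifs <;> simp_all
  · intro l _ hl
    simp [hl.symm, Ne.symm hl]
  · simp

lemma permMat_map_one : ((permMat (1 : Equiv.Perm ι)).map Complex.ofReal) = 1 := by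
  ext i j
  by_cases h : j = i <;> simp [permMat, Matrix.one_apply, h, Ne.symm, eq_comm]

lemma permMat_mulVec (σ : Equiv.Perm ι) (x : ι) :
    ((permMat σ).map Complex.ofReal) *ᵥ eVec x = eVec (σ x) := by
  ext i
  simp only [Matrix.mulVec, dotProduct, Matrix.map_apply, permMat, Matrix.of_apply, eVec]
  rw [Finset.sum_eq_single x]
  · by_cases h : σ x = i
    · simp [h]
    · simp [h, Ne.symm h]
  · intro l _ hl; simp [hl]
  · simp

lemma eVec_dot (y z : ι) : (eVec y : ι → ℂ) ⬝ᵥ eVec z = if z = y then 1 else 0 := by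
  simp only [dotProduct, eVec]
  rw [Finset.sum_eq_single y]
  · simp [eq_comm]
  · intro l _ hl; simp [hl]
  · simp

lemma star_eVec (y : ι) : star (eVec y : ι → ℂ) = eVec y := by
  ext i
  by_cases h : i = y <;> simp [eVec, h]

/-- Unitarity of the transition matrix of a real symmetric matrix. -/
lemma transU_unitary (M : Matrix ι ι ℝ) (hM : M.IsSymm) (t : ℝ) :
    (transU M t)ᴴ * transU M t = 1 := by
  have hMc : (M.map Complex.ofReal)ᴴ = M.map Complex.ofReal := by
    ext i j
    simp only [Matrix.conjTranspose_apply, Matrix.map_apply, RCLike.star_def, Complex.conj_ofReal]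
    rw [hM.apply]
  have hH : ((Complex.I * (t : ℂ)) • M.map Complex.ofReal)ᴴ
      = -((Complex.I * (t : ℂ)) • M.map Complex.ofReal) := by
    rw [Matrix.conjTranspose_smul, hMc, ← neg_smul]
    congr 1
    simp [Complex.ext_iff]
  rw [transU, ← Matrix.exp_conjTranspose, hH]
  rw [← Matrix.exp_add_of_commute _ _ ((Commute.refl ((Complex.I * (t : ℂ)) • M.map Complex.ofReal)).neg_left)]
  rw [neg_add_cancel, exp_zero]

/-- The transition matrix commutes with a commuting permutation matrix. -/
lemma transU_permMat_commute (M : Matrix ι ι ℝ) (σ : Equiv.Perm ι)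
    (hcomm : permMat σ * M = M * permMat σ) (t : ℝ) :
    transU M t * ((permMat σ).map Complex.ofReal)
      = ((permMat σ).map Complex.ofReal) * transU M t := by
  set Qc := (permMat σ).map Complex.ofReal with hQc
  set Rc := (permMat σ⁻¹).map Complex.ofReal with hRc
  have hQR : Qc * Rc = 1 := by
    rw [hQc, hRc, permMat_mul_permMat, mul_inv_cancel, permMat_map_one]
  have hRQ : Rc * Qc = 1 := by
    rw [hQc, hRc, permMat_mul_permMat, inv_mul_cancel, permMat_map_one]
  have hMcc : Qc * M.map Complex.ofReal = M.map Complex.ofReal * Qc := by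
    have h1 : (permMat σ * M).map (⇑Complex.ofRealHom) = (M * permMat σ).map ⇑Complex.ofRealHom := by
      rw [hcomm]
    rw [Matrix.map_mul, Matrix.map_mul] at h1
    exact h1
  set X := (Complex.I * (t : ℂ)) • M.map Complex.ofReal with hX
  have hXQ : Qc * X * Rc = X := by
    have h2 : Qc * X = X * Qc := by
      rw [hX, Matrix.mul_smul, Matrix.smul_mul, hMcc]
    rw [h2, mul_assoc, hQR, mul_one]
  have hUnit : ∀ (u : (Matrix ι ι ℂ)ˣ), (u : Matrix ι ι ℂ) = Qc → ((u⁻¹ : _ˣ) : Matrix ι ι ℂ) = Rc →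
      transU M t * Qc = Qc * transU M t := by
    intro u hu hui
    have h3 := Matrix.exp_units_conj u X
    rw [hu, hui, hXQ] at h3
    calc transU M t * Qc = (Qc * exp X * Rc) * Qc := by rw [transU, ← h3]
      _ = Qc * exp X * (Rc * Qc) := by rw [mul_assoc]
      _ = Qc * transU M t := by rw [hRQ, mul_one, transU]
  exact hUnit ⟨Qc, Rc, hQR, hRQ⟩ rfl rfl

lemma cont_F (Qc : Matrix ι ι ℂ) :
    Continuous fun w : ι → ℂ => star w ⬝ᵥ Qc *ᵥ w := by
  simp only [dotProduct, Matrix.mulVec, Pi.star_apply]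
  refine continuous_finset_sum _ fun i _ => ?_
  refine ((continuous_apply i).star).mul ?_
  exact continuous_finset_sum _ fun j _ => continuous_const.mul (continuous_apply j)

/-- The quadratic form of a commuting permutation matrix is conserved under PGST. -/
lemma pgst_invariant (M : Matrix ι ι ℝ) (hM : M.IsSymm) (σ : Equiv.Perm ι)
    (hcomm : permMat σ * M = M * permMat σ)
    {u v : ι → ℂ} (h : PGST M u v) :
    star u ⬝ᵥ ((permMat σ).map Complex.ofReal) *ᵥ u
      = star v ⬝ᵥ ((permMat σ).map Complex.ofReal) *ᵥ v := by
  obtain ⟨t, γ, hγ, hlim⟩ := h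
  set Qc := (permMat σ).map Complex.ofReal with hQc
  have hconst : ∀ k, star ((transU M (t k)) *ᵥ u) ⬝ᵥ Qc *ᵥ ((transU M (t k)) *ᵥ u)
      = star u ⬝ᵥ Qc *ᵥ u := by
    intro k
    set U := transU M (t k) with hU
    have key : Uᴴ * (Qc * U) = Qc := by
      rw [← transU_permMat_commute M σ hcomm (t k), ← hU, ← mul_assoc,
        transU_unitary M hM (t k), one_mul]
    rw [Matrix.star_mulVec, Matrix.mulVec_mulVec, ← dotProduct_mulVec,
      Matrix.mulVec_mulVec, key]
  have h2 : Filter.Tendsto (fun k => star ((transU M (t k)) *ᵥ u) ⬝ᵥ Qc *ᵥ ((transU M (t k)) *ᵥ u))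
      Filter.atTop (nhds (star (γ • v) ⬝ᵥ Qc *ᵥ (γ • v))) :=
    ((cont_F Qc).tendsto (γ • v)).comp hlim
  have h3 : star u ⬝ᵥ Qc *ᵥ u = star (γ • v) ⬝ᵥ Qc *ᵥ (γ • v) := by
    refine tendsto_nhds_unique ?_ h2
    simp only [hconst]
    exact tendsto_const_nhds
  rw [h3, star_smul, Matrix.mulVec_smul, smul_dotProduct, dotProduct_smul,
    smul_smul]
  have hγ1 : star γ * γ = 1 := by
    have : Complex.normSq γ = 1 := by
      rw [Complex.normSq_eq_norm_sq, hγ]; norm_num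
    rw [RCLike.star_def, mul_comm, Complex.mul_conj, this]
    norm_num
  rw [hγ1, one_smul]

/-- The quadratic form of a permutation matrix on a plus state. -/
lemma plus_form (σ : Equiv.Perm ι) (a b : ι) :
    star (plusState a b) ⬝ᵥ ((permMat σ).map Complex.ofReal) *ᵥ (plusState a b)
      = (2 : ℂ)⁻¹ * ((if σ a = a then 1 else 0) + (if σ b = a then 1 else 0)
          + ((if σ a = b then 1 else 0) + (if σ b = b then 1 else 0))) := by
  have hc : star (((Real.sqrt 2 : ℝ) : ℂ))⁻¹ = (((Real.sqrt 2 : ℝ) : ℂ))⁻¹ := by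
    rw [star_inv₀, RCLike.star_def, Complex.conj_ofReal]
  have hcc : (((Real.sqrt 2 : ℝ) : ℂ))⁻¹ * (((Real.sqrt 2 : ℝ) : ℂ))⁻¹ = (2 : ℂ)⁻¹ := by
    rw [← mul_inv, ← Complex.ofReal_mul, Real.mul_self_sqrt (by norm_num : (0:ℝ) ≤ 2)]
    norm_num
  rw [plusState, star_smul, hc, Matrix.mulVec_smul, smul_dotProduct,
    dotProduct_smul, smul_smul, hcc, smul_eq_mul]
  congr 1
  rw [star_add, star_eVec, star_eVec, Matrix.mulVec_add, permMat_mulVec, permMat_mulVec,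
    add_dotProduct, dotProduct_add, dotProduct_add,
    eVec_dot, eVec_dot, eVec_dot, eVec_dot]

end Aux

section Final

variable {n : ℕ} [NeZero n]

lemma two_cancel (hodd : Odd n) {x y : ZMod n} (h : x + x = y + y) : x = y := by
  have h2 : IsUnit (2 : ZMod n) := by
    have := (ZMod.isUnit_iff_coprime 2 n).mpr (Nat.coprime_two_left.mpr hodd)
    simpa using this
  refine h2.mul_left_cancel ?_
  rw [two_mul, two_mul, h]

lemma cayA_isSymm (S : Finset (ZMod n)) (hS : ∀ s ∈ S, -s ∈ S) : (cayA n S).IsSymm := by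
  have hS' : ∀ x : ZMod n, x ∈ S ↔ -x ∈ S := fun x =>
    ⟨fun hx => hS x hx, fun hx => by simpa using hS (-x) hx⟩
  ext i j
  simp only [Matrix.transpose_apply, cayA, Matrix.of_apply]
  rw [show j - i = -(i - j) by ring]
  exact if_congr (hS' (i - j)).symm rfl rfl

lemma permMat_comm (σ : Equiv.Perm (ZMod n)) (M : Matrix (ZMod n) (ZMod n) ℝ)
    (h : ∀ i j, M (σ i) (σ j) = M i j) : permMat σ * M = M * permMat σ := by
  ext i j
  simp only [Matrix.mul_apply, permMat, Matrix.of_apply, ite_mul, mul_ite, one_mul, mul_one,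
    zero_mul, mul_zero]
  rw [Finset.sum_eq_single (σ.symm i), Finset.sum_eq_single (σ j)]
  · rw [if_pos rfl, if_pos (σ.apply_symm_apply i)]
    have := h (σ.symm i) j
    rw [σ.apply_symm_apply] at this
    exact this.symm
  · intro l _ hl; rw [if_neg (Ne.symm hl)]
  · simp
  · intro l _ hl
    rw [if_neg]
    intro hc
    exact hl (by rw [← hc, σ.symm_apply_apply])
  · simp

end Final

/-- a circulant graph of odd order admits no pretty good plus state transfer. -/
theorem no_plus_pgst_odd_circulant (n : ℕ) [NeZero n] (hodd : Odd n)
    (S : Finset (ZMod n)) (h0 : (0 : ZMod n) ∉ S) (hS : ∀ s ∈ S, -s ∈ S) :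
    ¬ ∃ a b c d : ZMod n, a ≠ b ∧ c ≠ d ∧ eVec a + eVec b ≠ eVec c + eVec d ∧
        PGST (cayA n S) (plusState a b) (plusState c d) := by
  rintro ⟨a, b, c, d, hab, hcd, hne, hpgst⟩
  have hsymm : (cayA n S).IsSymm := cayA_isSymm S hS
  have hS' : ∀ x : ZMod n, x ∈ S ↔ -x ∈ S := fun x =>
    ⟨fun hx => hS x hx, fun hx => by simpa using hS (-x) hx⟩
  -- the reflection x ↦ (a+b) - x
  have hinv : Function.Involutive (fun x : ZMod n => a + b - x) := fun x => by ring
  set σ₁ : Equiv.Perm (ZMod n) := Function.Involutive.toPerm _ hinv with hσ₁def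
  have hσ₁app : ∀ x, σ₁ x = a + b - x := fun x => rfl
  have hcomm₁ : permMat σ₁ * cayA n S = cayA n S * permMat σ₁ := by
    refine permMat_comm σ₁ _ fun i j => ?_
    simp only [hσ₁app, cayA, Matrix.of_apply]
    rw [show (a + b - i) - (a + b - j) = -(i - j) by ring]
    exact if_congr (hS' (i - j)).symm rfl rfl
  have E1 := pgst_invariant (cayA n S) hsymm σ₁ hcomm₁ hpgst
  rw [plus_form, plus_form] at E1
  have E1' := mul_left_cancel₀ (by norm_num : (2:ℂ)⁻¹ ≠ 0) E1
  simp only [hσ₁app] at E1'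
  rw [show a + b - a = b by ring, show a + b - b = a by ring] at E1'
  rw [if_neg (Ne.symm hab), if_neg hab] at E1'
  simp only [eq_self_iff_true, if_true] at E1'
  have hsum : a + b = c + d := by
    by_cases h2 : a + b - d = c
    · linear_combination h2
    by_cases h3 : a + b - c = d
    · linear_combination h3
    rw [if_neg h2, if_neg h3] at E1'
    split_ifs at E1' with h1 h4 <;> norm_num at E1'
    exact absurd (two_cancel hodd (show c + c = d + d by linear_combination h4 - h1)) hcd
  -- the shift x ↦ x + (a - b)
  set σ₂ : Equiv.Perm (ZMod n) := Equiv.addRight (a - b) with hσ₂def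
  have hσ₂app : ∀ x, σ₂ x = x + (a - b) := fun x => rfl
  have hcomm₂ : permMat σ₂ * cayA n S = cayA n S * permMat σ₂ := by
    refine permMat_comm σ₂ _ fun i j => ?_
    simp only [hσ₂app, cayA, Matrix.of_apply]
    rw [show (i + (a - b)) - (j + (a - b)) = i - j by ring]
  have E2 := pgst_invariant (cayA n S) hsymm σ₂ hcomm₂ hpgst
  rw [plus_form, plus_form] at E2
  have E2' := mul_left_cancel₀ (by norm_num : (2:ℂ)⁻¹ ≠ 0) E2
  simp only [hσ₂app] at E2'
  have k1 : ¬(a + (a - b) = a) := fun h => hab (by linear_combination h)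
  have k2 : ¬(a + (a - b) = b) :=
    fun h => hab (two_cancel hodd (show a + a = b + b by linear_combination h))
  have k3 : ¬(b + (a - b) = b) := fun h => hab (by linear_combination h)
  have k4 : ¬(c + (a - b) = c) := fun h => hab (by linear_combination h)
  have k5 : ¬(d + (a - b) = d) := fun h => hab (by linear_combination h)
  rw [if_neg k1, if_pos (show b + (a - b) = a by ring), if_neg k2, if_neg k3,
    if_neg k4, if_neg k5] at E2'
  by_cases hQ : c + (a - b) = d
  · have had : a = d := two_cancel hodd (show a + a = d + d by linear_combination hsum + hQ)
    have hbc : b = c := two_cancel hodd (show b + b = c + c by linear_combination hsum - hQ)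
    exact hne (by rw [had, hbc]; exact add_comm _ _)
  · rw [if_neg hQ] at E2'
    split_ifs at E2' with hP <;> norm_num at E2'
    have hac : a = c := two_cancel hodd (show a + a = c + c by linear_combination hsum + hP)
    have hbd : b = d := two_cancel hodd (show b + b = d + d by linear_combination hsum - hP)
    exact hne (by rw [hac, hbd])
end
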